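/- For ρ > 1, R(ρ) > 1, where R(ρ) = (Σ_{k∈ℤ} ρ^{−4k²}) / (Σ_{k∈ℤ} ρ^{−4(k+1/2)²}). -/

import Mathlib

open Real Complex HurwitzZeta

-- real-part sums for cosKernel at a = 0 and a = 1/2
lemma hasSum_cosKernel_zero {t : ℝ} (ht : 0 < t) :
    HasSum (fun n : ℤ => rexp (-π * n ^ 2 * t)) (HurwitzZeta.cosKernel 0 t) := by
  have h := hasSum_int_cosKernel 0 ht
  rw [← hasSum_ofReal]
  convert h using 2 with n
  push_cast
  simp [Complex.exp_zero]
  simp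

lemma hasSum_cosKernel_half {t : ℝ} (ht : 0 < t) :
    HasSum (fun n : ℤ => (-1 : ℝ) ^ n * rexp (-π * n ^ 2 * t))
      (HurwitzZeta.cosKernel (1 / 2 : ℝ) t) := by
  have h := hasSum_int_cosKernel (1 / 2 : ℝ) ht
  rw [← hasSum_ofReal]
  convert h using 2 with n
  have : 2 * (π : ℂ) * Complex.I * ((1 : ℂ) / 2) * n = n * (π * Complex.I) := by ring
  push_cast
  rw [this, Complex.exp_int_mul, Complex.exp_pi_mul_I]

theorem analyticity_radius_gt_one (ρ : ℝ) (hρ : 1 < ρ) :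
    1 < (∑' k : ℤ, ρ ^ (-(4 * (k : ℝ) ^ 2))) /
        (∑' k : ℤ, ρ ^ (-(4 * ((k : ℝ) + 1 / 2) ^ 2))) := by
  have hρ0 : (0 : ℝ) < ρ := lt_trans one_pos hρ
  have hlρ : 0 < Real.log ρ := Real.log_pos hρ
  set t : ℝ := 4 * Real.log ρ / π with ht_def
  have ht : 0 < t := by positivity
  have h0 : ∀ x : ℝ, ρ ^ (-(4 * x)) = rexp (-π * x * t) := by
    intro x
    rw [Real.rpow_def_of_pos hρ0]
    congr 1
    rw [ht_def]
    field_simp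
  have hnum : HasSum (fun k : ℤ => ρ ^ (-(4 * (k : ℝ) ^ 2)))
      (HurwitzZeta.evenKernel 0 t) := by
    have := hasSum_int_evenKernel (0 : ℝ) ht
    simpa [h0] using this
  have hden : HasSum (fun k : ℤ => ρ ^ (-(4 * ((k : ℝ) + 1 / 2) ^ 2)))
      (HurwitzZeta.evenKernel (1 / 2 : ℝ) t) := by
    have := hasSum_int_evenKernel (1 / 2 : ℝ) ht
    simpa [h0] using this
  rw [hnum.tsum_eq, hden.tsum_eq]
  have hden_pos : 0 < HurwitzZeta.evenKernel (1 / 2 : ℝ) t := by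
    refine hasSum_lt (f := fun _ : ℤ => (0 : ℝ)) (i := (0 : ℤ)) (fun i => ?_) ?_
      hasSum_zero hden
    · positivity
    · simpa using Real.rpow_pos_of_pos hρ0 _
  rw [one_lt_div hden_pos]
  have ht' : (0 : ℝ) < 1 / t := by positivity
  have hlt : HurwitzZeta.cosKernel (1 / 2 : ℝ) (1 / t) <
      HurwitzZeta.cosKernel 0 (1 / t) := by
    refine hasSum_lt (i := (1 : ℤ)) (fun n => ?_) ?_ (hasSum_cosKernel_half ht')
      (hasSum_cosKernel_zero ht')
    · have h1 : (-1 : ℝ) ^ n ≤ 1 := by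
        rcases Int.even_or_odd n with h | h
        · rw [h.neg_one_zpow]
        · rw [h.neg_one_zpow]; norm_num
      calc (-1 : ℝ) ^ n * rexp (-π * n ^ 2 * (1 / t))
          ≤ 1 * rexp (-π * n ^ 2 * (1 / t)) :=
            mul_le_mul_of_nonneg_right h1 (Real.exp_pos _).le
        _ = _ := one_mul _
    · have : ((-1 : ℝ) ^ (1 : ℤ)) = -1 := zpow_one _
      rw [this]
      nlinarith [Real.exp_pos (-π * (1 : ℤ) ^ 2 * (1 / t))]
  calc HurwitzZeta.evenKernel (1 / 2 : ℝ) t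
      = 1 / t ^ (1 / 2 : ℝ) * HurwitzZeta.cosKernel (1 / 2 : ℝ) (1 / t) :=
        HurwitzZeta.evenKernel_functional_equation _ _
    _ < 1 / t ^ (1 / 2 : ℝ) * HurwitzZeta.cosKernel 0 (1 / t) := by
        exact mul_lt_mul_of_pos_left hlt (by positivity)
    _ = HurwitzZeta.evenKernel 0 t := by
        rw [← HurwitzZeta.evenKernel_functional_equation]
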